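/- (Theorem 2, part 1.) If Problem (SLQ) is open-loop solvable at the initial state x₀ = 0, then the homogeneous cost satisfies J⁰(0,u) ≥ 0 for every admissible control u. -/

import Mathlib

open MeasureTheory ProbabilityTheory Matrix Finset Filter Topology

namespace SLQ

/-- Data of the discrete-time stochastic LQ problem. -/
structure Setup (Ω : Type) [MeasurableSpace Ω] (n m N : ℕ) where
  w : ℕ → Ω → ℝ
  A : ℕ → Matrix (Fin n) (Fin n) ℝ
  B : ℕ → Matrix (Fin n) (Fin m) ℝ
  C : ℕ → Matrix (Fin n) (Fin n) ℝ
  D : ℕ → Matrix (Fin n) (Fin m) ℝ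
  Q : ℕ → Matrix (Fin n) (Fin n) ℝ
  S : ℕ → Matrix (Fin m) (Fin n) ℝ
  R : ℕ → Matrix (Fin m) (Fin m) ℝ
  H : Matrix (Fin n) (Fin n) ℝ
  b : ℕ → Ω → Fin n → ℝ
  sig : ℕ → Ω → Fin n → ℝ
  q : ℕ → Ω → Fin n → ℝ
  rho : ℕ → Ω → Fin m → ℝ
  g : Ω → Fin n → ℝ

variable {Ω : Type} [MeasurableSpace Ω] {n m N : ℕ}

/-- `Filt 𝒮 t` is the σ-algebra `𝒻_{t-1} = σ(w_0, …, w_{t-1})`; in particular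
`Filt 𝒮 0` is the trivial σ-algebra `𝒻_{-1}`. -/
def Filt (𝒮 : Setup Ω n m N) (t : ℕ) : MeasurableSpace Ω :=
  ⨆ i ∈ Finset.range t, MeasurableSpace.comap (𝒮.w i) inferInstance

/-- Standing hypotheses on the data: the noises are measurable, independent, centred with
unit variance; the random coefficients are adapted and square integrable; the weighting
matrices are symmetric. -/
def Valid (𝒮 : Setup Ω n m N) (μ : Measure Ω) : Prop :=
  (∀ t, t < N → Measurable (𝒮.w t)) ∧
  iIndepFun (m := fun _ : Fin N => (inferInstance : MeasurableSpace ℝ)) (fun i : Fin N => 𝒮.w i) μ ∧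
  (∀ t, t < N → ∫ ω, 𝒮.w t ω ∂μ = 0) ∧
  (∀ t, t < N → ∫ ω, (𝒮.w t ω) ^ 2 ∂μ = 1) ∧
  (∀ t, t < N → Measurable[Filt 𝒮 t] (𝒮.b t) ∧ MemLp (𝒮.b t) 2 μ) ∧
  (∀ t, t < N → Measurable[Filt 𝒮 t] (𝒮.sig t) ∧ MemLp (𝒮.sig t) 2 μ) ∧
  (∀ t, t < N → Measurable[Filt 𝒮 t] (𝒮.q t) ∧ MemLp (𝒮.q t) 2 μ) ∧
  (∀ t, t < N → Measurable[Filt 𝒮 t] (𝒮.rho t) ∧ MemLp (𝒮.rho t) 2 μ) ∧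
  (Measurable[Filt 𝒮 N] 𝒮.g ∧ MemLp 𝒮.g 2 μ) ∧
  (∀ t, t < N → (𝒮.Q t).IsSymm ∧ (𝒮.R t).IsSymm) ∧ 𝒮.H.IsSymm

/-- Admissible (open-loop) controls: square integrable and `𝒻_{t-1}`-adapted. -/
def Admissible (𝒮 : Setup Ω n m N) (μ : Measure Ω) (u : ℕ → Ω → Fin m → ℝ) : Prop :=
  ∀ t, t < N → Measurable[Filt 𝒮 t] (u t) ∧ MemLp (u t) 2 μ

/-- The state trajectory `x_0 = x₀`, `x_{t+1} = A_t x_t + B_t u_t + b_t + (C_t x_t + D_t u_t + σ_t) w_t`. -/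
def traj (𝒮 : Setup Ω n m N) (x₀ : Fin n → ℝ) (u : ℕ → Ω → Fin m → ℝ) : ℕ → Ω → Fin n → ℝ
  | 0 => fun _ => x₀
  | t + 1 => fun ω =>
      (𝒮.A t).mulVec (traj 𝒮 x₀ u t ω) + (𝒮.B t).mulVec (u t ω) + 𝒮.b t ω
        + 𝒮.w t ω • ((𝒮.C t).mulVec (traj 𝒮 x₀ u t ω) + (𝒮.D t).mulVec (u t ω) + 𝒮.sig t ω)

/-- The cost functional `J(x₀, u)`. -/
noncomputable def cost (𝒮 : Setup Ω n m N) (μ : Measure Ω) (x₀ : Fin n → ℝ)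
    (u : ℕ → Ω → Fin m → ℝ) : ℝ :=
  ∫ ω, ((∑ t ∈ Finset.range N,
      (traj 𝒮 x₀ u t ω ⬝ᵥ (𝒮.Q t).mulVec (traj 𝒮 x₀ u t ω)
        + 2 * (u t ω ⬝ᵥ (𝒮.S t).mulVec (traj 𝒮 x₀ u t ω))
        + u t ω ⬝ᵥ (𝒮.R t).mulVec (u t ω)
        + 2 * (traj 𝒮 x₀ u t ω ⬝ᵥ 𝒮.q t ω)
        + 2 * (u t ω ⬝ᵥ 𝒮.rho t ω)))
    + traj 𝒮 x₀ u N ω ⬝ᵥ 𝒮.H.mulVec (traj 𝒮 x₀ u N ω)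
    + 2 * (traj 𝒮 x₀ u N ω ⬝ᵥ 𝒮.g ω)) ∂μ

/-- `u` is an open-loop optimal control at the initial state `x₀`. -/
def OpenLoopOptimal (𝒮 : Setup Ω n m N) (μ : Measure Ω) (x₀ : Fin n → ℝ)
    (u : ℕ → Ω → Fin m → ℝ) : Prop :=
  Admissible 𝒮 μ u ∧ ∀ u', Admissible 𝒮 μ u' → cost 𝒮 μ x₀ u ≤ cost 𝒮 μ x₀ u'

/-- The homogeneous problem: all the random coefficients `b, σ, q, ρ, g` are set to zero. -/
def homog (𝒮 : Setup Ω n m N) : Setup Ω n m N :=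
  { 𝒮 with b := fun _ _ => 0, sig := fun _ _ => 0, q := fun _ _ => 0,
           rho := fun _ _ => 0, g := fun _ => 0 }

/-- The closed-loop state under a feedback pair `(K, v)`. -/
def cltraj (𝒮 : Setup Ω n m N) (K : ℕ → Matrix (Fin m) (Fin n) ℝ)
    (v : ℕ → Ω → Fin m → ℝ) (x₀ : Fin n → ℝ) : ℕ → Ω → Fin n → ℝ
  | 0 => fun _ => x₀
  | t + 1 => fun ω =>
      (𝒮.A t + 𝒮.B t * K t).mulVec (cltraj 𝒮 K v x₀ t ω) + (𝒮.B t).mulVec (v t ω) + 𝒮.b t ω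
        + 𝒮.w t ω • ((𝒮.C t + 𝒮.D t * K t).mulVec (cltraj 𝒮 K v x₀ t ω)
            + (𝒮.D t).mulVec (v t ω) + 𝒮.sig t ω)

/-- The outcome control `u_t = K_t x_t + v_t` of a feedback pair `(K, v)` at `x₀`. -/
def outcome (𝒮 : Setup Ω n m N) (K : ℕ → Matrix (Fin m) (Fin n) ℝ)
    (v : ℕ → Ω → Fin m → ℝ) (x₀ : Fin n → ℝ) : ℕ → Ω → Fin m → ℝ :=
  fun t ω => (K t).mulVec (cltraj 𝒮 K v x₀ t ω) + v t ω

/-- A closed-loop strategy: deterministic gains `K_t` and adapted square-integrable `v_t`. -/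
def ClosedLoopStrategy (𝒮 : Setup Ω n m N) (μ : Measure Ω)
    (_K : ℕ → Matrix (Fin m) (Fin n) ℝ) (v : ℕ → Ω → Fin m → ℝ) : Prop :=
  ∀ t, t < N → Measurable[Filt 𝒮 t] (v t) ∧ MemLp (v t) 2 μ

/-- `(K, v)` is a closed-loop optimal strategy. -/
def ClosedLoopOptimal (𝒮 : Setup Ω n m N) (μ : Measure Ω)
    (K : ℕ → Matrix (Fin m) (Fin n) ℝ) (v : ℕ → Ω → Fin m → ℝ) : Prop :=
  ClosedLoopStrategy 𝒮 μ K v ∧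
  ∀ x₀ u, Admissible 𝒮 μ u → cost 𝒮 μ x₀ (outcome 𝒮 K v x₀) ≤ cost 𝒮 μ x₀ u

/-- `R̂_t = R_t + B_tᵀ P_{t+1} B_t + D_tᵀ P_{t+1} D_t`. -/
def Rhat (𝒮 : Setup Ω n m N) (P : ℕ → Matrix (Fin n) (Fin n) ℝ) (t : ℕ) :
    Matrix (Fin m) (Fin m) ℝ :=
  𝒮.R t + (𝒮.B t)ᵀ * P (t + 1) * 𝒮.B t + (𝒮.D t)ᵀ * P (t + 1) * 𝒮.D t


section Aux

variable {Ω : Type} [MeasurableSpace Ω] {n m N : ℕ}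

lemma filt_mono (𝒮 : Setup Ω n m N) {s t : ℕ} (h : s ≤ t) : Filt 𝒮 s ≤ Filt 𝒮 t := by
  refine iSup₂_le fun i hi => ?_
  exact le_iSup₂ (f := fun i _ => MeasurableSpace.comap (𝒮.w i) inferInstance) i
    (Finset.mem_range.mpr (lt_of_lt_of_le (Finset.mem_range.mp hi) h))

lemma filt_le (𝒮 : Setup Ω n m N) (hw : ∀ t, t < N → Measurable (𝒮.w t)) {t : ℕ} (ht : t ≤ N) :
    Filt 𝒮 t ≤ ‹MeasurableSpace Ω› := by
  refine iSup₂_le fun i hi => ?_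
  exact (hw i (lt_of_lt_of_le (Finset.mem_range.mp hi) ht)).comap_le

lemma measurable_w_filt (𝒮 : Setup Ω n m N) (t : ℕ) :
    Measurable[Filt 𝒮 (t + 1)] (𝒮.w t) :=
  Measurable.of_comap_le (le_iSup₂ (f := fun i _ => MeasurableSpace.comap (𝒮.w i) inferInstance)
    t (Finset.mem_range.mpr (Nat.lt_succ_self t)))

lemma indep_w (𝒮 : Setup Ω n m N) (μ : Measure Ω) (hvalid : Valid 𝒮 μ) {t : ℕ} (ht : t < N) :
    ProbabilityTheory.Indep (Filt 𝒮 t) (MeasurableSpace.comap (𝒮.w t) inferInstance) μ := by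
  set s : Fin N → MeasurableSpace Ω := fun i => MeasurableSpace.comap (𝒮.w i) inferInstance with hs
  have h_le : ∀ i : Fin N, s i ≤ ‹MeasurableSpace Ω› := fun i => (hvalid.1 i i.isLt).comap_le
  have h_indep : ProbabilityTheory.iIndep s μ := hvalid.2.1
  have h := ProbabilityTheory.indep_biSup_compl h_le h_indep {i : Fin N | (i : ℕ) < t}
  refine ProbabilityTheory.indep_of_indep_of_le_right
    (ProbabilityTheory.indep_of_indep_of_le_left h ?_) ?_
  · refine iSup₂_le fun i hi => ?_
    have hiN : i < N := lt_of_lt_of_le (Finset.mem_range.mp hi) ht.le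
    exact le_iSup₂ (f := fun i _ => s i) (⟨i, hiN⟩ : Fin N)
      (show (⟨i, hiN⟩ : Fin N) ∈ {i : Fin N | (i : ℕ) < t} from Finset.mem_range.mp hi)
  · exact le_iSup₂ (f := fun i _ => s i) (⟨t, ht⟩ : Fin N)
      (show (⟨t, ht⟩ : Fin N) ∈ {i : Fin N | (i : ℕ) < t}ᶜ from by simp)

lemma integrable_mul_L2 {μ : Measure Ω} {f g : Ω → ℝ} (hf : MemLp f 2 μ) (hg : MemLp g 2 μ) :
    Integrable (fun ω => f ω * g ω) μ := by
  have h : MemLp (f • g) 1 μ := hg.smul hf (hpqr := ⟨by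
    simp only [one_div, inv_one]
    exact ENNReal.inv_two_add_inv_two⟩)
  exact memLp_one_iff_integrable.mp h

lemma memLp_proj {μ : Measure Ω} {k : ℕ} {f : Ω → Fin k → ℝ} (hf : MemLp f 2 μ) (i : Fin k) :
    MemLp (fun ω => f ω i) 2 μ :=
  (ContinuousLinearMap.proj (R := ℝ) (φ := fun _ : Fin k => ℝ) i).comp_memLp' hf

lemma memLp_mulVec_comp {μ : Measure Ω} {k l : ℕ} (M : Matrix (Fin k) (Fin l) ℝ)
    {f : Ω → Fin l → ℝ} (hf : ∀ j, MemLp (fun ω => f ω j) 2 μ) (i : Fin k) :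
    MemLp (fun ω => M.mulVec (f ω) i) 2 μ := by
  simp only [Matrix.mulVec, dotProduct]
  exact memLp_finset_sum _ fun j _ => (hf j).const_mul (M i j)

lemma measurable_mulVec {m' : MeasurableSpace Ω} {k l : ℕ} (M : Matrix (Fin k) (Fin l) ℝ)
    {f : Ω → Fin l → ℝ} (hf : Measurable[m'] f) :
    Measurable[m'] fun ω => M.mulVec (f ω) := by
  rw [measurable_pi_iff]
  intro i
  simp only [Matrix.mulVec, dotProduct]
  exact Finset.measurable_sum _ fun j _ => measurable_const.mul ((measurable_pi_apply j).comp hf)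

lemma measurable_add_vec {m' : MeasurableSpace Ω} {k : ℕ} {f g : Ω → Fin k → ℝ}
    (hf : Measurable[m'] f) (hg : Measurable[m'] g) :
    Measurable[m'] fun ω => f ω + g ω := by
  rw [measurable_pi_iff]
  intro i
  simp only [Pi.add_apply]
  exact ((measurable_pi_apply i).comp hf).add ((measurable_pi_apply i).comp hg)

lemma measurable_smul_vec {m' : MeasurableSpace Ω} {k : ℕ} {a : Ω → ℝ} {c : Ω → Fin k → ℝ}
    (ha : Measurable[m'] a) (hc : Measurable[m'] c) :
    Measurable[m'] fun ω => a ω • c ω := by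
  rw [measurable_pi_iff]
  intro i
  simp only [Pi.smul_apply, smul_eq_mul]
  exact ha.mul ((measurable_pi_apply i).comp hc)

lemma memLp_w_mul (𝒮 : Setup Ω n m N) (μ : Measure Ω) (hvalid : Valid 𝒮 μ) {t : ℕ} (ht : t < N)
    {c : Ω → ℝ} (hcm : Measurable[Filt 𝒮 t] c) (hc2 : MemLp c 2 μ) :
    MemLp (fun ω => 𝒮.w t ω * c ω) 2 μ := by
  have hwmeas : Measurable (𝒮.w t) := hvalid.1 t ht
  have hcm' : Measurable c := hcm.mono (filt_le 𝒮 hvalid.1 ht.le) le_rfl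
  have hindepF : ProbabilityTheory.IndepFun c (𝒮.w t) μ :=
    ProbabilityTheory.indep_of_indep_of_le_left (indep_w 𝒮 μ hvalid ht) hcm.comap_le
  have hsq : ProbabilityTheory.IndepFun (fun ω => c ω ^ 2) (fun ω => 𝒮.w t ω ^ 2) μ :=
    hindepF.comp (measurable_id.pow_const 2) (measurable_id.pow_const 2)
  have hw2 : Integrable (fun ω => 𝒮.w t ω ^ 2) μ := by
    by_contra h
    have := hvalid.2.2.2.1 t ht
    rw [integral_undef h] at this
    norm_num at this
  have hc2' : Integrable (fun ω => c ω ^ 2) μ :=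
    (memLp_two_iff_integrable_sq hc2.aestronglyMeasurable).mp hc2
  have hprod : Integrable (fun ω => c ω ^ 2 * 𝒮.w t ω ^ 2) μ := hsq.integrable_mul hc2' hw2
  have heq : (fun ω => (𝒮.w t ω * c ω) ^ 2) = fun ω => c ω ^ 2 * 𝒮.w t ω ^ 2 := by
    funext ω; ring
  refine (memLp_two_iff_integrable_sq ((hwmeas.mul hcm').aestronglyMeasurable)).mpr ?_
  rw [show (fun x => (𝒮.w t * c) x ^ 2) = fun ω => c ω ^ 2 * 𝒮.w t ω ^ 2 from heq]
  exact hprod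

lemma traj_reg (𝒮 : Setup Ω n m N) (μ : Measure Ω) [IsProbabilityMeasure μ]
    (hvalid : Valid 𝒮 μ) {u : ℕ → Ω → Fin m → ℝ} (hu : Admissible 𝒮 μ u) (x₀ : Fin n → ℝ) :
    ∀ t, t ≤ N → Measurable[Filt 𝒮 t] (traj 𝒮 x₀ u t) ∧
      ∀ i, MemLp (fun ω => traj 𝒮 x₀ u t ω i) 2 μ := by
  intro t
  induction t with
  | zero => exact fun _ => ⟨measurable_const, fun i => memLp_const _⟩
  | succ t ih =>
    intro htN
    have htN' : t < N := htN
    obtain ⟨ihm, ihp⟩ := ih htN'.le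
    obtain ⟨hum, hup⟩ := hu t htN'
    obtain ⟨hbm, hbp⟩ := hvalid.2.2.2.2.1 t htN'
    obtain ⟨hsm, hsp⟩ := hvalid.2.2.2.2.2.1 t htN'
    have hcm : Measurable[Filt 𝒮 t] fun ω =>
        (𝒮.C t).mulVec (traj 𝒮 x₀ u t ω) + (𝒮.D t).mulVec (u t ω) + 𝒮.sig t ω :=
      measurable_add_vec (measurable_add_vec (measurable_mulVec _ ihm)
        (measurable_mulVec _ hum)) hsm
    have hcp : ∀ i, MemLp (fun ω =>
        ((𝒮.C t).mulVec (traj 𝒮 x₀ u t ω) + (𝒮.D t).mulVec (u t ω) + 𝒮.sig t ω) i) 2 μ :=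
      fun i => ((memLp_mulVec_comp (𝒮.C t) ihp i).add
        (memLp_mulVec_comp (𝒮.D t) (fun j => memLp_proj hup j) i)).add (memLp_proj hsp i)
    have l1 : Filt 𝒮 t ≤ Filt 𝒮 (t + 1) := filt_mono 𝒮 (Nat.le_succ t)
    constructor
    · simp only [traj]
      exact measurable_add_vec (measurable_add_vec (measurable_add_vec
          (measurable_mulVec _ (ihm.mono l1 le_rfl))
          (measurable_mulVec _ (hum.mono l1 le_rfl)))
          (hbm.mono l1 le_rfl))
        (measurable_smul_vec (measurable_w_filt 𝒮 t) (hcm.mono l1 le_rfl))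
    · intro i
      simp only [traj, Pi.add_apply, Pi.smul_apply, smul_eq_mul]
      exact (((memLp_mulVec_comp (𝒮.A t) ihp i).add
          (memLp_mulVec_comp (𝒮.B t) (fun j => memLp_proj hup j) i)).add
          (memLp_proj hbp i)).add
        (memLp_w_mul 𝒮 μ hvalid htN' ((measurable_pi_apply i).comp hcm) (hcp i))

lemma valid_homog (𝒮 : Setup Ω n m N) (μ : Measure Ω) [IsProbabilityMeasure μ]
    (hvalid : Valid 𝒮 μ) : Valid (homog 𝒮) μ := by
  obtain ⟨h1, h2, h3, h4, _, _, _, _, _, h10, h11⟩ := hvalid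
  exact ⟨h1, h2, h3, h4,
    fun t _ => ⟨measurable_const, memLp_const _⟩,
    fun t _ => ⟨measurable_const, memLp_const _⟩,
    fun t _ => ⟨measurable_const, memLp_const _⟩,
    fun t _ => ⟨measurable_const, memLp_const _⟩,
    ⟨measurable_const, memLp_const _⟩, h10, h11⟩

lemma traj_comb (𝒮 : Setup Ω n m N) (u' u : ℕ → Ω → Fin m → ℝ) (x₀ : Fin n → ℝ) (lam : ℝ) :
    ∀ t ω, traj 𝒮 x₀ (fun s ω => u' s ω + lam • u s ω) t ω
      = traj 𝒮 x₀ u' t ω + lam • traj (homog 𝒮) (0 : Fin n → ℝ) u t ω := by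
  intro t
  induction t with
  | zero => intro ω; simp [traj]
  | succ t ih =>
    intro ω
    simp only [traj, ih, homog, Matrix.mulVec_add, Matrix.mulVec_smul, add_zero]
    module

lemma quad_expand {n m : ℕ} (Q : Matrix (Fin n) (Fin n) ℝ) (S : Matrix (Fin m) (Fin n) ℝ)
    (R : Matrix (Fin m) (Fin m) ℝ) (q : Fin n → ℝ) (r : Fin m → ℝ)
    (x y : Fin n → ℝ) (a b : Fin m → ℝ) (lam : ℝ) :
    (x + lam • y) ⬝ᵥ Q.mulVec (x + lam • y) + 2 * ((a + lam • b) ⬝ᵥ S.mulVec (x + lam • y))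
      + (a + lam • b) ⬝ᵥ R.mulVec (a + lam • b) + 2 * ((x + lam • y) ⬝ᵥ q)
      + 2 * ((a + lam • b) ⬝ᵥ r)
    = (x ⬝ᵥ Q.mulVec x + 2 * (a ⬝ᵥ S.mulVec x) + a ⬝ᵥ R.mulVec a + 2 * (x ⬝ᵥ q) + 2 * (a ⬝ᵥ r))
      + lam * (x ⬝ᵥ Q.mulVec y + y ⬝ᵥ Q.mulVec x + 2 * (a ⬝ᵥ S.mulVec y) + 2 * (b ⬝ᵥ S.mulVec x)
          + a ⬝ᵥ R.mulVec b + b ⬝ᵥ R.mulVec a + 2 * (y ⬝ᵥ q) + 2 * (b ⬝ᵥ r))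
      + lam ^ 2 * (y ⬝ᵥ Q.mulVec y + 2 * (b ⬝ᵥ S.mulVec y) + b ⬝ᵥ R.mulVec b) := by
  simp only [Matrix.mulVec_add, Matrix.mulVec_smul, add_dotProduct,
    dotProduct_add, smul_dotProduct, dotProduct_smul, smul_eq_mul]
  ring

/-- The integrand of the cost functional. -/
noncomputable def integrand (𝒮 : Setup Ω n m N) (x₀ : Fin n → ℝ) (u : ℕ → Ω → Fin m → ℝ)
    (ω : Ω) : ℝ :=
  (∑ t ∈ Finset.range N,
      (traj 𝒮 x₀ u t ω ⬝ᵥ (𝒮.Q t).mulVec (traj 𝒮 x₀ u t ω)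
        + 2 * (u t ω ⬝ᵥ (𝒮.S t).mulVec (traj 𝒮 x₀ u t ω))
        + u t ω ⬝ᵥ (𝒮.R t).mulVec (u t ω)
        + 2 * (traj 𝒮 x₀ u t ω ⬝ᵥ 𝒮.q t ω)
        + 2 * (u t ω ⬝ᵥ 𝒮.rho t ω)))
    + traj 𝒮 x₀ u N ω ⬝ᵥ 𝒮.H.mulVec (traj 𝒮 x₀ u N ω)
    + 2 * (traj 𝒮 x₀ u N ω ⬝ᵥ 𝒮.g ω)

/-- The cross (first-order) term in the expansion of the cost. -/
noncomputable def cross (𝒮 : Setup Ω n m N) (u' u : ℕ → Ω → Fin m → ℝ) (ω : Ω) : ℝ :=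
  (∑ t ∈ Finset.range N,
      (traj 𝒮 0 u' t ω ⬝ᵥ (𝒮.Q t).mulVec (traj (homog 𝒮) 0 u t ω)
        + traj (homog 𝒮) 0 u t ω ⬝ᵥ (𝒮.Q t).mulVec (traj 𝒮 0 u' t ω)
        + 2 * (u' t ω ⬝ᵥ (𝒮.S t).mulVec (traj (homog 𝒮) 0 u t ω))
        + 2 * (u t ω ⬝ᵥ (𝒮.S t).mulVec (traj 𝒮 0 u' t ω))
        + u' t ω ⬝ᵥ (𝒮.R t).mulVec (u t ω)
        + u t ω ⬝ᵥ (𝒮.R t).mulVec (u' t ω)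
        + 2 * (traj (homog 𝒮) 0 u t ω ⬝ᵥ 𝒮.q t ω)
        + 2 * (u t ω ⬝ᵥ 𝒮.rho t ω)))
    + (traj 𝒮 0 u' N ω ⬝ᵥ 𝒮.H.mulVec (traj (homog 𝒮) 0 u N ω)
      + traj (homog 𝒮) 0 u N ω ⬝ᵥ 𝒮.H.mulVec (traj 𝒮 0 u' N ω)
      + 2 * (traj (homog 𝒮) 0 u N ω ⬝ᵥ 𝒮.g ω))

/-- The second-order (homogeneous) term in the expansion of the cost. -/
noncomputable def hexpr (𝒮 : Setup Ω n m N) (u : ℕ → Ω → Fin m → ℝ) (ω : Ω) : ℝ :=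
  (∑ t ∈ Finset.range N,
      (traj (homog 𝒮) 0 u t ω ⬝ᵥ (𝒮.Q t).mulVec (traj (homog 𝒮) 0 u t ω)
        + 2 * (u t ω ⬝ᵥ (𝒮.S t).mulVec (traj (homog 𝒮) 0 u t ω))
        + u t ω ⬝ᵥ (𝒮.R t).mulVec (u t ω)))
    + traj (homog 𝒮) 0 u N ω ⬝ᵥ 𝒮.H.mulVec (traj (homog 𝒮) 0 u N ω)

lemma cost_eq_integral (𝒮 : Setup Ω n m N) (μ : Measure Ω) (x₀ : Fin n → ℝ)
    (u : ℕ → Ω → Fin m → ℝ) : cost 𝒮 μ x₀ u = ∫ ω, integrand 𝒮 x₀ u ω ∂μ := rfl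

lemma cost_homog_eq (𝒮 : Setup Ω n m N) (μ : Measure Ω) (u : ℕ → Ω → Fin m → ℝ) :
    cost (homog 𝒮) μ (0 : Fin n → ℝ) u = ∫ ω, hexpr 𝒮 u ω ∂μ := by
  refine integral_congr_ae (Filter.Eventually.of_forall fun ω => ?_)
  simp [hexpr, homog, dotProduct_zero]

lemma point_eq (𝒮 : Setup Ω n m N) (u' u : ℕ → Ω → Fin m → ℝ) (lam : ℝ) (ω : Ω) :
    integrand 𝒮 (0 : Fin n → ℝ) (fun s ω => u' s ω + lam • u s ω) ω
      = integrand 𝒮 (0 : Fin n → ℝ) u' ω + lam * cross 𝒮 u' u ω + lam ^ 2 * hexpr 𝒮 u ω := by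
  simp only [integrand, cross, hexpr]
  simp only [traj_comb 𝒮 u' u (0 : Fin n → ℝ) lam]
  rw [Finset.sum_congr rfl fun t _ => quad_expand (𝒮.Q t) (𝒮.S t) (𝒮.R t) (𝒮.q t ω)
      (𝒮.rho t ω) (traj 𝒮 0 u' t ω) (traj (homog 𝒮) 0 u t ω) (u' t ω) (u t ω) lam,
    Finset.sum_add_distrib, Finset.sum_add_distrib, ← Finset.mul_sum, ← Finset.mul_sum]
  simp only [Matrix.mulVec_add, Matrix.mulVec_smul, add_dotProduct,
    dotProduct_add, smul_dotProduct, dotProduct_smul, smul_eq_mul]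
  ring

lemma integrable_dotP {μ : Measure Ω} {k : ℕ} {f g : Ω → Fin k → ℝ}
    (hf : ∀ i, MemLp (fun ω => f ω i) 2 μ) (hg : ∀ i, MemLp (fun ω => g ω i) 2 μ) :
    Integrable (fun ω => f ω ⬝ᵥ g ω) μ := by
  simp only [dotProduct]
  exact integrable_finset_sum _ fun i _ => integrable_mul_L2 (hf i) (hg i)

lemma integrable_dotMul {μ : Measure Ω} {k l : ℕ} (M : Matrix (Fin k) (Fin l) ℝ)
    {f : Ω → Fin k → ℝ} {g : Ω → Fin l → ℝ}
    (hf : ∀ i, MemLp (fun ω => f ω i) 2 μ) (hg : ∀ j, MemLp (fun ω => g ω j) 2 μ) :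
    Integrable (fun ω => f ω ⬝ᵥ M.mulVec (g ω)) μ :=
  integrable_dotP hf (fun i => memLp_mulVec_comp M hg i)

lemma integrand_integrable (𝒮 : Setup Ω n m N) (μ : Measure Ω) [IsProbabilityMeasure μ]
    (hvalid : Valid 𝒮 μ) {u : ℕ → Ω → Fin m → ℝ} (hu : Admissible 𝒮 μ u) (x₀ : Fin n → ℝ) :
    Integrable (integrand 𝒮 x₀ u) μ := by
  have hx := traj_reg 𝒮 μ hvalid hu x₀
  have hgc := fun i => memLp_proj (μ := μ) hvalid.2.2.2.2.2.2.2.2.1.2 i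
  refine Integrable.add (Integrable.add (integrable_finset_sum _ fun t ht => ?_) ?_) ?_
  · have htN : t < N := Finset.mem_range.mp ht
    have hxt := (hx t htN.le).2
    have hut := fun i => memLp_proj (μ := μ) ((hu t htN).2) i
    have hqt := fun i => memLp_proj (μ := μ) (hvalid.2.2.2.2.2.2.1 t htN).2 i
    have hrt := fun i => memLp_proj (μ := μ) (hvalid.2.2.2.2.2.2.2.1 t htN).2 i
    exact ((((integrable_dotMul _ hxt hxt).add
        ((integrable_dotMul _ hut hxt).const_mul 2)).add
        (integrable_dotMul _ hut hut)).add
        ((integrable_dotP hxt hqt).const_mul 2)).add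
        ((integrable_dotP hut hrt).const_mul 2)
  · exact integrable_dotMul _ (hx N le_rfl).2 (hx N le_rfl).2
  · exact (integrable_dotP (hx N le_rfl).2 hgc).const_mul 2

lemma cross_integrable (𝒮 : Setup Ω n m N) (μ : Measure Ω) [IsProbabilityMeasure μ]
    (hvalid : Valid 𝒮 μ) {u' u : ℕ → Ω → Fin m → ℝ}
    (hu' : Admissible 𝒮 μ u') (hu : Admissible 𝒮 μ u) :
    Integrable (cross 𝒮 u' u) μ := by
  have hx := traj_reg 𝒮 μ hvalid hu' (0 : Fin n → ℝ)
  have hy := traj_reg (homog 𝒮) μ (valid_homog 𝒮 μ hvalid) (u := u) hu (0 : Fin n → ℝ)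
  have hgc := fun i => memLp_proj (μ := μ) hvalid.2.2.2.2.2.2.2.2.1.2 i
  refine Integrable.add (integrable_finset_sum _ fun t ht => ?_) ?_
  · have htN : t < N := Finset.mem_range.mp ht
    have hxt := (hx t htN.le).2
    have hyt := (hy t htN.le).2
    have hut := fun i => memLp_proj (μ := μ) ((hu t htN).2) i
    have hu't := fun i => memLp_proj (μ := μ) ((hu' t htN).2) i
    have hqt := fun i => memLp_proj (μ := μ) (hvalid.2.2.2.2.2.2.1 t htN).2 i
    have hrt := fun i => memLp_proj (μ := μ) (hvalid.2.2.2.2.2.2.2.1 t htN).2 i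
    exact (((((((integrable_dotMul _ hxt hyt).add
        (integrable_dotMul _ hyt hxt)).add
        ((integrable_dotMul _ hu't hyt).const_mul 2)).add
        ((integrable_dotMul _ hut hxt).const_mul 2)).add
        (integrable_dotMul _ hu't hut)).add
        (integrable_dotMul _ hut hu't)).add
        ((integrable_dotP hyt hqt).const_mul 2)).add
        ((integrable_dotP hut hrt).const_mul 2)
  · exact ((integrable_dotMul _ (hx N le_rfl).2 (hy N le_rfl).2).add
        (integrable_dotMul _ (hy N le_rfl).2 (hx N le_rfl).2)).add
        ((integrable_dotP (hy N le_rfl).2 hgc).const_mul 2)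

lemma hexpr_integrable (𝒮 : Setup Ω n m N) (μ : Measure Ω) [IsProbabilityMeasure μ]
    (hvalid : Valid 𝒮 μ) {u : ℕ → Ω → Fin m → ℝ} (hu : Admissible 𝒮 μ u) :
    Integrable (hexpr 𝒮 u) μ := by
  have hy := traj_reg (homog 𝒮) μ (valid_homog 𝒮 μ hvalid) (u := u) hu (0 : Fin n → ℝ)
  refine Integrable.add (integrable_finset_sum _ fun t ht => ?_) ?_
  · have htN : t < N := Finset.mem_range.mp ht
    have hyt := (hy t htN.le).2
    have hut := fun i => memLp_proj (μ := μ) ((hu t htN).2) i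
    exact ((integrable_dotMul _ hyt hyt).add
        ((integrable_dotMul _ hut hyt).const_mul 2)).add
        (integrable_dotMul _ hut hut)
  · exact integrable_dotMul _ (hy N le_rfl).2 (hy N le_rfl).2

end Aux


/-- Theorem 2, part 1: open-loop solvability at `x₀ = 0` forces nonnegativity of the
homogeneous cost `J⁰(0, ·)`. -/
theorem statement_6
    {Ω : Type} [MeasurableSpace Ω] {n m N : ℕ} (hN : 1 ≤ N)
    (𝒮 : Setup Ω n m N) (μ : Measure Ω) [IsProbabilityMeasure μ]
    (hvalid : Valid 𝒮 μ)
    (hsolv : ∃ u, OpenLoopOptimal 𝒮 μ (0 : Fin n → ℝ) u) :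
    ∀ u, Admissible 𝒮 μ u → 0 ≤ cost (homog 𝒮) μ (0 : Fin n → ℝ) u := by
  intro u hu
  obtain ⟨ustar, hadm_star, hopt⟩ := hsolv
  have hG := cross_integrable 𝒮 μ hvalid hadm_star hu
  have hF := integrand_integrable 𝒮 μ hvalid hadm_star (0 : Fin n → ℝ)
  have hH := hexpr_integrable 𝒮 μ hvalid hu
  have key : ∀ lam : ℝ, cost 𝒮 μ (0 : Fin n → ℝ) (fun s ω => ustar s ω + lam • u s ω)
      = cost 𝒮 μ (0 : Fin n → ℝ) ustar + lam * (∫ ω, cross 𝒮 ustar u ω ∂μ)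
        + lam ^ 2 * cost (homog 𝒮) μ (0 : Fin n → ℝ) u := by
    intro lam
    rw [cost_eq_integral, cost_eq_integral, cost_homog_eq]
    have e1 : ∫ ω, integrand 𝒮 (0 : Fin n → ℝ) (fun s ω => ustar s ω + lam • u s ω) ω ∂μ
        = ∫ ω, (integrand 𝒮 (0 : Fin n → ℝ) ustar ω + lam * cross 𝒮 ustar u ω
            + lam ^ 2 * hexpr 𝒮 u ω) ∂μ :=
      integral_congr_ae (Filter.Eventually.of_forall fun ω => point_eq 𝒮 ustar u lam ω)
    have hFG : Integrable (fun ω => integrand 𝒮 (0 : Fin n → ℝ) ustar ω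
        + lam * cross 𝒮 ustar u ω) μ := hF.add (hG.const_mul lam)
    rw [e1, integral_add hFG (hH.const_mul (lam ^ 2)),
      integral_add hF (hG.const_mul lam), integral_const_mul, integral_const_mul]
  have hadm : ∀ lam : ℝ, Admissible 𝒮 μ (fun s ω => ustar s ω + lam • u s ω) := by
    intro lam t ht
    obtain ⟨m1, p1⟩ := hadm_star t ht
    obtain ⟨m2, p2⟩ := hu t ht
    have m2' : Measurable[Filt 𝒮 t] fun ω => (fun _ : Ω => lam) ω • u t ω :=
      measurable_smul_vec measurable_const m2
    exact ⟨measurable_add_vec m1 m2', p1.add (p2.const_smul lam)⟩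
  have h1 := hopt _ (hadm 1)
  have h2 := hopt _ (hadm (-1))
  rw [key 1] at h1
  rw [key (-1)] at h2
  nlinarith [h1, h2]

end SLQ
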